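/- Let e₀, e₁, e₂, e₃ be the standard basis of ℝ⁴ and define the complex null tetrad vectors in ℂ⁴: l = (e₀ + e₁)/√2, n = (e₀ − e₁)/√2, m = (e₂ + i·e₃)/√2, m̄ = (e₂ − i·e₃)/√2. For a real alternating bilinear form F on ℝ⁴ (extended complex-bilinearly to ℂ⁴), define Φ(F) = (F(l,m), ½(F(l,n) + F(m̄,m)), F(m̄,n)) ∈ ℂ³. Then Φ is an ℝ-linear bijection from the 6-dimensional real space of alternating bilinear forms on ℝ⁴ onto ℂ³. -/

import Mathlib

open Complex

noncomputable section

/-- Complex-bilinear extension of a real alternating bilinear form on `ℝ⁴`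
to `ℂ⁴`. -/
def complexify (F : AlternatingMap ℝ (Fin 4 → ℝ) ℝ (Fin 2)) (x y : Fin 4 → ℂ) : ℂ :=
  ∑ i : Fin 4, ∑ j : Fin 4,
    x i * y j * ((F ![Pi.single i 1, Pi.single j 1] : ℝ) : ℂ)

/-- The null tetrad vector `l = (e₀ + e₁)/√2` in `ℂ⁴`. -/
def tetradL : Fin 4 → ℂ := ![1 / (Real.sqrt 2 : ℂ), 1 / (Real.sqrt 2 : ℂ), 0, 0]

/-- The null tetrad vector `n = (e₀ − e₁)/√2` in `ℂ⁴`. -/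
def tetradN : Fin 4 → ℂ := ![1 / (Real.sqrt 2 : ℂ), -(1 / (Real.sqrt 2 : ℂ)), 0, 0]

/-- The null tetrad vector `m = (e₂ + i e₃)/√2` in `ℂ⁴`. -/
def tetradM : Fin 4 → ℂ := ![0, 0, 1 / (Real.sqrt 2 : ℂ), Complex.I / (Real.sqrt 2 : ℂ)]

/-- The null tetrad vector `m̄ = (e₂ − i e₃)/√2` in `ℂ⁴`. -/
def tetradMbar : Fin 4 → ℂ := ![0, 0, 1 / (Real.sqrt 2 : ℂ), -(Complex.I / (Real.sqrt 2 : ℂ))]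

/-- The Newman–Penrose scalar map `Φ(F) = (F(l,m), ½(F(l,n)+F(m̄,m)), F(m̄,n))`. -/
def npScalars (F : AlternatingMap ℝ (Fin 4 → ℝ) ℝ (Fin 2)) : ℂ × ℂ × ℂ :=
  (complexify F tetradL tetradM,
   (complexify F tetradL tetradN + complexify F tetradMbar tetradM) / 2,
   complexify F tetradMbar tetradN)

/-! ### Auxiliary lemmas -/

lemma hs2 : ((Real.sqrt 2 : ℂ))⁻¹ ^ 2 = 2⁻¹ := by
  norm_cast
  simp [← Real.sqrt_inv]

lemma fswap (F : AlternatingMap ℝ (Fin 4 → ℝ) ℝ (Fin 2)) (x y : Fin 4 → ℝ) :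
    F ![y, x] = -F ![x, y] := by
  have h := F.map_swap (v := ![x, y]) (i := (0 : Fin 2)) (j := 1) (by decide)
  have he : ![x, y] ∘ ⇑(Equiv.swap (0:Fin 2) 1) = ![y, x] := by
    funext k; fin_cases k <;> simp [Equiv.swap_apply_def]
  rwa [he] at h

lemma fdiag (F : AlternatingMap ℝ (Fin 4 → ℝ) ℝ (Fin 2)) (x : Fin 4 → ℝ) :
    F ![x, x] = 0 :=
  F.map_eq_zero_of_eq ![x, x] (i := 0) (j := 1) rfl (by decide)

/-- The complex components of `F` on basis vectors. -/
def cc (F : AlternatingMap ℝ (Fin 4 → ℝ) ℝ (Fin 2)) (i j : Fin 4) : ℂ :=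
  ((F ![Pi.single i 1, Pi.single j 1] : ℝ) : ℂ)

lemma evLM (F : AlternatingMap ℝ (Fin 4 → ℝ) ℝ (Fin 2)) : complexify F tetradL tetradM
    = (cc F 0 2 + cc F 1 2 + Complex.I * (cc F 0 3 + cc F 1 3)) / 2 := by
  simp [complexify, tetradL, tetradM, Fin.sum_univ_four, cc]
  ring_nf
  rw [hs2]; ring

lemma evLN (F : AlternatingMap ℝ (Fin 4 → ℝ) ℝ (Fin 2)) :
    complexify F tetradL tetradN = -cc F 0 1 := by
  simp [complexify, tetradL, tetradN, Fin.sum_univ_four, cc]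
  rw [fswap F (Pi.single 0 1) (Pi.single 1 1)]
  push_cast
  ring_nf
  rw [hs2]
  simp [fdiag, Complex.I_sq]
  ring

lemma evMM (F : AlternatingMap ℝ (Fin 4 → ℝ) ℝ (Fin 2)) :
    complexify F tetradMbar tetradM = Complex.I * cc F 2 3 := by
  simp [complexify, tetradM, tetradMbar, Fin.sum_univ_four, cc]
  rw [fswap F (Pi.single 2 1) (Pi.single 3 1)]
  push_cast
  ring_nf
  rw [hs2]
  simp [fdiag, Complex.I_sq]
  ring_nf

lemma evMN (F : AlternatingMap ℝ (Fin 4 → ℝ) ℝ (Fin 2)) : complexify F tetradMbar tetradN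
    = (cc F 1 2 - cc F 0 2 + Complex.I * (cc F 0 3 - cc F 1 3)) / 2 := by
  simp [complexify, tetradN, tetradMbar, Fin.sum_univ_four, cc]
  rw [fswap F (Pi.single 0 1) (Pi.single 2 1), fswap F (Pi.single 1 1) (Pi.single 2 1),
      fswap F (Pi.single 0 1) (Pi.single 3 1), fswap F (Pi.single 1 1) (Pi.single 3 1)]
  push_cast
  ring_nf
  rw [hs2]; ring

lemma cadd (F G : AlternatingMap ℝ (Fin 4 → ℝ) ℝ (Fin 2)) (x y : Fin 4 → ℂ) :
    complexify (F + G) x y = complexify F x y + complexify G x y := by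
  simp only [complexify, AlternatingMap.add_apply, Complex.ofReal_add, mul_add,
    Finset.sum_add_distrib]

lemma csmul (r : ℝ) (F : AlternatingMap ℝ (Fin 4 → ℝ) ℝ (Fin 2)) (x y : Fin 4 → ℂ) :
    complexify (r • F) x y = (r : ℂ) * complexify F x y := by
  simp only [complexify, AlternatingMap.smul_apply, smul_eq_mul, Complex.ofReal_mul,
    Finset.mul_sum]
  refine Finset.sum_congr rfl fun i _ => Finset.sum_congr rfl fun j _ => by ring

/-- Two alternating 2-forms agreeing on the six ordered basis pairs are equal. -/
lemma ext_of_six {F G : AlternatingMap ℝ (Fin 4 → ℝ) ℝ (Fin 2)}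
    (h01 : F ![Pi.single 0 1, Pi.single 1 1] = G ![Pi.single 0 1, Pi.single 1 1])
    (h02 : F ![Pi.single 0 1, Pi.single 2 1] = G ![Pi.single 0 1, Pi.single 2 1])
    (h03 : F ![Pi.single 0 1, Pi.single 3 1] = G ![Pi.single 0 1, Pi.single 3 1])
    (h12 : F ![Pi.single 1 1, Pi.single 2 1] = G ![Pi.single 1 1, Pi.single 2 1])
    (h13 : F ![Pi.single 1 1, Pi.single 3 1] = G ![Pi.single 1 1, Pi.single 3 1])
    (h23 : F ![Pi.single 2 1, Pi.single 3 1] = G ![Pi.single 2 1, Pi.single 3 1]) :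
    F = G := by
  have key : ∀ a b : Fin 4, a ≠ b →
      F ![Pi.single a 1, Pi.single b 1] = G ![Pi.single a 1, Pi.single b 1] := by
    intro a b hab
    fin_cases a <;> fin_cases b <;>
      first
        | exact absurd rfl hab
        | assumption
        | (rw [fswap F, fswap G]
           first
             | exact congrArg Neg.neg h01
             | exact congrArg Neg.neg h02
             | exact congrArg Neg.neg h03
             | exact congrArg Neg.neg h12
             | exact congrArg Neg.neg h13
             | exact congrArg Neg.neg h23)
  refine Module.Basis.ext_alternating (Pi.basisFun ℝ (Fin 4)) fun v hv => ?_
  have hab : v 0 ≠ v 1 := fun h => absurd (hv h) (by decide)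
  have hvec : ∀ (H : AlternatingMap ℝ (Fin 4 → ℝ) ℝ (Fin 2)),
      (H fun i => (Pi.basisFun ℝ (Fin 4)) (v i))
        = H ![Pi.single (v 0) 1, Pi.single (v 1) 1] := by
    intro H
    congr 1
    funext k; fin_cases k <;> simp [Pi.basisFun_apply]
  rw [hvec F, hvec G]
  exact key _ _ hab

/-- The basic 2-form `eᵢ ∧ eⱼ`. -/
def w (i j : Fin 4) : AlternatingMap ℝ (Fin 4 → ℝ) ℝ (Fin 2) :=
  (Matrix.detRowAlternating : AlternatingMap ℝ (Fin 2 → ℝ) ℝ (Fin 2)).compLinearMap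
    (LinearMap.pi ![LinearMap.proj i, LinearMap.proj j])

lemma wval (i j : Fin 4) (x y : Fin 4 → ℝ) :
    w i j ![x, y] = x i * y j - x j * y i := by
  rw [w, AlternatingMap.compLinearMap_apply]
  have h : (fun k => (LinearMap.pi (R := ℝ) ![LinearMap.proj i, LinearMap.proj j] :
      (Fin 4 → ℝ) →ₗ[ℝ] (Fin 2 → ℝ)) (![x, y] k))
      = Matrix.of ![![x i, x j], ![y i, y j]] := by
    funext k l; fin_cases k <;> fin_cases l <;> simp
  rw [h, show Matrix.detRowAlternating (Matrix.of ![![x i, x j], ![y i, y j]])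
      = Matrix.det (Matrix.of ![![x i, x j], ![y i, y j]]) from rfl, Matrix.det_fin_two]
  simp

/-- The Newman–Penrose scalar map is an ℝ-linear bijection from the 6-dimensional
real space of alternating bilinear forms on `ℝ⁴` onto `ℂ³`. -/
theorem npScalars_linear_bijective :
    IsLinearMap ℝ npScalars ∧ Function.Bijective npScalars := by
  refine ⟨⟨?_, ?_⟩, ?_, ?_⟩
  · intro F G
    simp only [npScalars, cadd, Prod.mk_add_mk, Prod.mk.injEq]
    refine ⟨trivial, by ring, trivial⟩
  · intro r F
    simp only [npScalars, csmul, Prod.smul_mk, Complex.real_smul, Prod.mk.injEq]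
    refine ⟨trivial, by ring, trivial⟩
  · -- injectivity
    intro F G h
    simp only [npScalars, Prod.mk.injEq] at h
    obtain ⟨h1, h2, h3⟩ := h
    rw [evLM F, evLM G] at h1
    rw [evLN F, evLN G, evMM F, evMM G] at h2
    rw [evMN F, evMN G] at h3
    have r1 := congrArg Complex.re h1
    have i1 := congrArg Complex.im h1
    have r2 := congrArg Complex.re h2
    have i2 := congrArg Complex.im h2
    have r3 := congrArg Complex.re h3
    have i3 := congrArg Complex.im h3
    simp [cc, Complex.div_re, Complex.div_im] at r1 i1 r2 i2 r3 i3
    exact ext_of_six (by linarith) (by linarith) (by linarith) (by linarith) (by linarith)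
      (by linarith)
  · -- surjectivity
    rintro ⟨a, b, c⟩
    refine ⟨(-2 * b.re) • w 0 1 + (a.re - c.re) • w 0 2 + (a.im + c.im) • w 0 3
      + (a.re + c.re) • w 1 2 + (a.im - c.im) • w 1 3 + (2 * b.im) • w 2 3, ?_⟩
    set F := (-2 * b.re) • w 0 1 + (a.re - c.re) • w 0 2 + (a.im + c.im) • w 0 3
      + (a.re + c.re) • w 1 2 + (a.im - c.im) • w 1 3 + (2 * b.im) • w 2 3 with hF
    have e01 : cc F 0 1 = ((-2 * b.re : ℝ) : ℂ) := by
      simp [cc, hF, wval, Pi.single_apply]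
    have e02 : cc F 0 2 = ((a.re - c.re : ℝ) : ℂ) := by
      simp [cc, hF, wval, Pi.single_apply]
    have e03 : cc F 0 3 = ((a.im + c.im : ℝ) : ℂ) := by
      simp [cc, hF, wval, Pi.single_apply]
    have e12 : cc F 1 2 = ((a.re + c.re : ℝ) : ℂ) := by
      simp [cc, hF, wval, Pi.single_apply]
    have e13 : cc F 1 3 = ((a.im - c.im : ℝ) : ℂ) := by
      simp [cc, hF, wval, Pi.single_apply]
    have e23 : cc F 2 3 = ((2 * b.im : ℝ) : ℂ) := by
      simp [cc, hF, wval, Pi.single_apply]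
    rw [npScalars, evLM, evLN, evMM, evMN, e01, e02, e03, e12, e13, e23]
    refine Prod.ext ?_ (Prod.ext ?_ ?_) <;> simp only [] <;>
      (apply Complex.ext <;> simp [Complex.div_re, Complex.div_im] <;> ring)

end
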